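/- Discrete Gaussian tails are bounded by shifted continuous Gaussian tails: For every integer m ≥ 1 and every real σ > 0, if X is distributed according to the discrete Gaussian N_ℤ(σ²) and Z is distributed according to the centered real Gaussian measure N(0, σ²), then Pr[X ≥ m] ≤ Pr[Z ≥ m − 1]. -/

import Mathlib

open scoped ENNReal
open ProbabilityTheory
open MeasureTheory Real

/-- The discrete Gaussian mass function `N_ℤ(v)` (real-valued) with variance
parameter `v = σ²`: `Pr[X = x] = exp(-x²/(2v)) / ∑_{y ∈ ℤ} exp(-y²/(2v))`. -/
noncomputable def discreteGaussianPMF (v : ℝ) (x : ℤ) : ℝ :=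
  Real.exp (-(x : ℝ) ^ 2 / (2 * v)) / ∑' y : ℤ, Real.exp (-(y : ℝ) ^ 2 / (2 * v))

lemma aux_summable_nat {c : ℝ} (hc : 0 < c) :
    Summable fun n : ℕ => Real.exp (-c * (n : ℝ) ^ 2) := by
  refine Summable.of_nonneg_of_le (fun n => (Real.exp_pos _).le) (fun n => ?_)
    (Real.summable_exp_nat_mul_iff.mpr (show -c < 0 by linarith))
  apply Real.exp_le_exp.2
  have h1 : (n : ℝ) ≤ (n : ℝ) ^ 2 := by exact_mod_cast Nat.le_self_pow two_ne_zero n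
  nlinarith

lemma aux_summable_int {c : ℝ} (hc : 0 < c) :
    Summable fun n : ℤ => Real.exp (-c * (n : ℝ) ^ 2) := by
  apply Summable.of_nat_of_neg <;> simpa using aux_summable_nat hc

lemma aux_lower (σ : ℝ) (hσ : 0 < σ) :
    Real.sqrt (2 * π * σ ^ 2) ≤ ∑' y : ℤ, Real.exp (-(y : ℝ) ^ 2 / (2 * σ ^ 2)) := by
  have hπ := Real.pi_pos
  have ha : (0 : ℝ) < (2 * π * σ ^ 2)⁻¹ := by positivity
  set a : ℝ := (2 * π * σ ^ 2)⁻¹ with ha_def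
  have h1 : ∀ y : ℤ, -(y : ℝ) ^ 2 / (2 * σ ^ 2) = -π * a * (y : ℝ) ^ 2 := by
    intro y
    rw [ha_def]
    field_simp
  have h2 := Real.tsum_exp_neg_mul_int_sq ha
  have hsum2 : Summable fun n : ℤ => Real.exp (-π / a * (n : ℝ) ^ 2) := by
    have : -π / a = -(π / a) := by ring
    rw [this]
    exact aux_summable_int (by positivity)
  calc Real.sqrt (2 * π * σ ^ 2)
      = 1 / a ^ (1 / 2 : ℝ) * 1 := by
        rw [mul_one, one_div, ha_def, Real.inv_rpow (by positivity), inv_inv,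
          ← Real.sqrt_eq_rpow]
    _ ≤ 1 / a ^ (1 / 2 : ℝ) * ∑' n : ℤ, Real.exp (-π / a * (n : ℝ) ^ 2) := by
        have h0 : (1 : ℝ) ≤ ∑' n : ℤ, Real.exp (-π / a * (n : ℝ) ^ 2) := by
          have := Summable.le_tsum hsum2 0 (fun j _ => (Real.exp_pos _).le)
          simpa using this
        have hpos : (0 : ℝ) ≤ 1 / a ^ (1 / 2 : ℝ) := by positivity
        nlinarith
    _ = ∑' y : ℤ, Real.exp (-(y : ℝ) ^ 2 / (2 * σ ^ 2)) := by
        rw [← h2]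
        exact tsum_congr fun y => by rw [h1]

lemma aux_tail {c : ℝ} (hc : 0 < c) (m : ℤ) (hm : 1 ≤ m) :
    (∑' x : ℤ, if m ≤ x then Real.exp (-c * (x : ℝ) ^ 2) else 0)
      ≤ ∫ t in Set.Ioi ((m : ℝ) - 1), Real.exp (-c * t ^ 2) := by
  have hm' : (1 : ℝ) ≤ (m : ℝ) := by exact_mod_cast hm
  have hint : Integrable (fun t : ℝ => Real.exp (-c * t ^ 2)) := integrable_exp_neg_mul_sq hc
  set f : ℤ → ℝ := fun x => if m ≤ x then Real.exp (-c * (x : ℝ) ^ 2) else 0 with hf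
  have hginj : Function.Injective (fun n : ℕ => m + (n : ℤ)) := fun a b h => by
    simpa using h
  have hsupp : ∀ x ∉ Set.range (fun n : ℕ => m + (n : ℤ)), f x = 0 := by
    intro x hx
    have : ¬ m ≤ x := by
      intro hle
      exact hx ⟨(x - m).toNat, by simp; omega⟩
    simp [hf, this]
  have hsupp' : Function.support f ⊆ Set.range (fun n : ℕ => m + (n : ℤ)) := by
    intro x hx
    by_contra h
    exact hx (hsupp x h)
  have hre : (∑' n : ℕ, Real.exp (-c * ((m : ℝ) + (n : ℕ)) ^ 2)) = ∑' x : ℤ, f x := by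
    rw [← Function.Injective.tsum_eq hginj hsupp']
    refine tsum_congr fun n => ?_
    have h : m ≤ m + (n : ℤ) := by omega
    simp only [hf, if_pos h]
    push_cast
    ring_nf
  have hsumf : Summable f := by
    refine Summable.of_nonneg_of_le (fun x => ?_) (fun x => ?_) (aux_summable_int hc)
    · by_cases h : m ≤ x <;> simp [hf, h, Real.exp_nonneg]
    · by_cases h : m ≤ x <;> simp [hf, h, Real.exp_nonneg]
  have hsumn : Summable fun n : ℕ => Real.exp (-c * ((m : ℝ) + (n : ℕ)) ^ 2) := by
    rw [← Function.Injective.summable_iff hginj hsupp] at hsumf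
    refine hsumf.congr fun n => ?_
    have h : m ≤ m + (n : ℤ) := by omega
    simp only [Function.comp, hf, if_pos h]
    push_cast
    ring_nf
  rw [← hre]
  refine Summable.tsum_le_of_sum_le hsumn fun s => ?_
  obtain ⟨N, hN⟩ := s.exists_nat_subset_range
  set a : ℕ → ℝ := fun k => (m : ℝ) - 1 + k with ha
  have step1 : ∑ n ∈ s, Real.exp (-c * ((m : ℝ) + (n : ℕ)) ^ 2)
      ≤ ∑ n ∈ Finset.range N, Real.exp (-c * ((m : ℝ) + (n : ℕ)) ^ 2) :=
    Finset.sum_le_sum_of_subset_of_nonneg hN (fun i _ _ => (Real.exp_pos _).le)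
  have step2 : ∀ k : ℕ, Real.exp (-c * ((m : ℝ) + (k : ℕ)) ^ 2)
      ≤ ∫ t in (a k)..(a (k + 1)), Real.exp (-c * t ^ 2) := by
    intro k
    have hk : (0 : ℝ) ≤ (k : ℝ) := Nat.cast_nonneg k
    have hak : a k = (m : ℝ) - 1 + k := rfl
    have hak1 : a (k + 1) = (m : ℝ) + k := by simp only [ha]; push_cast; ring
    have hab : a k ≤ a (k + 1) := by rw [hak, hak1]; linarith
    have hconst : Real.exp (-c * ((m : ℝ) + (k : ℕ)) ^ 2)
        = ∫ _ in (a k)..(a (k + 1)), Real.exp (-c * ((m : ℝ) + (k : ℕ)) ^ 2) := by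
      rw [intervalIntegral.integral_const]
      have h1 : a (k + 1) - a k = 1 := by rw [hak, hak1]; ring
      rw [h1, one_smul]
    rw [hconst]
    refine intervalIntegral.integral_mono_on hab intervalIntegrable_const
      hint.intervalIntegrable (fun t ht => ?_)
    rw [Set.mem_Icc, hak, hak1] at ht
    apply Real.exp_le_exp.2
    have ht0 : 0 ≤ t := by linarith [ht.1]
    have hsq : t ^ 2 ≤ ((m : ℝ) + k) ^ 2 := pow_le_pow_left₀ ht0 ht.2 2
    nlinarith
  have step3 : ∑ k ∈ Finset.range N, (∫ t in (a k)..(a (k + 1)), Real.exp (-c * t ^ 2))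
      = ∫ t in (a 0)..(a N), Real.exp (-c * t ^ 2) :=
    intervalIntegral.sum_integral_adjacent_intervals fun k _ => hint.intervalIntegrable
  have ha0 : a 0 = (m : ℝ) - 1 := by simp [ha]
  have haN : a 0 ≤ a N := by
    simp only [ha]
    have : (0 : ℝ) ≤ (N : ℝ) := Nat.cast_nonneg N
    push_cast
    linarith
  have step4 : (∫ t in (a 0)..(a N), Real.exp (-c * t ^ 2))
      = ∫ t in Set.Ioc (a 0) (a N), Real.exp (-c * t ^ 2) :=
    intervalIntegral.integral_of_le haN
  have step5 : (∫ t in Set.Ioc (a 0) (a N), Real.exp (-c * t ^ 2))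
      ≤ ∫ t in Set.Ioi ((m : ℝ) - 1), Real.exp (-c * t ^ 2) := by
    rw [ha0]
    refine setIntegral_mono_set hint.integrableOn
      (Filter.Eventually.of_forall fun t => (Real.exp_pos _).le)
      (HasSubset.Subset.eventuallyLE Set.Ioc_subset_Ioi_self)
  calc ∑ n ∈ s, Real.exp (-c * ((m : ℝ) + (n : ℕ)) ^ 2)
      ≤ ∑ n ∈ Finset.range N, Real.exp (-c * ((m : ℝ) + (n : ℕ)) ^ 2) := step1
    _ ≤ ∑ k ∈ Finset.range N, ∫ t in (a k)..(a (k + 1)), Real.exp (-c * t ^ 2) :=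
        Finset.sum_le_sum fun k _ => step2 k
    _ = ∫ t in (a 0)..(a N), Real.exp (-c * t ^ 2) := step3
    _ = ∫ t in Set.Ioc (a 0) (a N), Real.exp (-c * t ^ 2) := step4
    _ ≤ ∫ t in Set.Ioi ((m : ℝ) - 1), Real.exp (-c * t ^ 2) := step5

/-- Discrete Gaussian tails are bounded by shifted continuous Gaussian tails:
for integer `m ≥ 1`, `Pr[X ≥ m] ≤ Pr[Z ≥ m - 1]` where `X ∼ N_ℤ(σ²)` and
`Z ∼ N(0, σ²)`. -/
theorem discreteGaussian_tail_le_gaussian_tail (m : ℤ) (hm : 1 ≤ m) (σ : ℝ) (hσ : 0 < σ) :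
    ENNReal.ofReal (∑' x : ℤ, if m ≤ x then discreteGaussianPMF (σ ^ 2) x else 0)
      ≤ gaussianReal 0 ((σ ^ 2).toNNReal) {z : ℝ | (m : ℝ) - 1 ≤ z} := by
  have hπ := Real.pi_pos
  set c : ℝ := (2 * σ ^ 2)⁻¹ with hc_def
  have hc : 0 < c := by positivity
  have hcform : ∀ t : ℝ, -t ^ 2 / (2 * σ ^ 2) = -c * t ^ 2 := fun t => by
    rw [hc_def, div_eq_mul_inv]; ring
  set S : ℝ := ∑' y : ℤ, Real.exp (-(y : ℝ) ^ 2 / (2 * σ ^ 2)) with hS_def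
  have hsqrt_pos : 0 < Real.sqrt (2 * π * σ ^ 2) := Real.sqrt_pos.mpr (by positivity)
  have hS : Real.sqrt (2 * π * σ ^ 2) ≤ S := aux_lower σ hσ
  have hSpos : 0 < S := lt_of_lt_of_le hsqrt_pos hS
  -- variance
  have hv : (σ ^ 2).toNNReal ≠ 0 := by
    simp only [ne_eq, Real.toNNReal_eq_zero, not_le]
    positivity
  have hvc : ((σ ^ 2).toNNReal : ℝ) = σ ^ 2 := Real.coe_toNNReal _ (sq_nonneg σ)
  rw [gaussianReal_apply_eq_integral 0 hv]
  apply ENNReal.ofReal_le_ofReal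
  -- rewrite the LHS sum
  have hL : (∑' x : ℤ, if m ≤ x then discreteGaussianPMF (σ ^ 2) x else 0)
      = (∑' x : ℤ, if m ≤ x then Real.exp (-c * (x : ℝ) ^ 2) else 0) / S := by
    rw [← tsum_div_const]
    refine tsum_congr fun x => ?_
    by_cases h : m ≤ x
    · simp only [if_pos h, discreteGaussianPMF, hcform, hS_def]
    · simp [h]
  rw [hL]
  -- rewrite the RHS integral
  have hset : {z : ℝ | (m : ℝ) - 1 ≤ z} = Set.Ici ((m : ℝ) - 1) := rfl
  have hR : (∫ x in {z : ℝ | (m : ℝ) - 1 ≤ z}, gaussianPDFReal 0 ((σ ^ 2).toNNReal) x)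
      = (∫ t in Set.Ioi ((m : ℝ) - 1), Real.exp (-c * t ^ 2)) / Real.sqrt (2 * π * σ ^ 2) := by
    rw [hset, MeasureTheory.integral_Ici_eq_integral_Ioi]
    rw [div_eq_inv_mul, ← integral_const_mul]
    refine setIntegral_congr_fun measurableSet_Ioi fun t _ => ?_
    rw [gaussianPDFReal]
    rw [hvc, sub_zero, hcform]
  rw [hR]
  refine div_le_div₀ (by positivity) ?_ hsqrt_pos hS
  · exact aux_tail hc m hm
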